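/- Let m ≥ 1 and let C, C′ ∈ ℂ^{m×2m} be two normalized systems of boundary conditions of rank m that are equivalent (C′ = T·C for some invertible m×m complex matrix T). Then the multiset of orders { k_1(C), …, k_m(C) } equals the multiset of orders { k_1(C′), …, k_m(C′) }; i.e., the set of orders of normalized boundary conditions does not depend on the transformations used to normalize them. -/

import Mathlib

/-- A system of boundary conditions of order `m` is a matrix `C ∈ ℂ^{m×2m}`; we index
the `2m` columns by `Fin m ⊕ Fin m`: `Sum.inl k` is the coefficient of `y^{(k)}(0)` and
`Sum.inr k` that of `y^{(k)}(1)`.  The order `k_j(C)` of row `j` is the largest `k` with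
`(C_{j,k}, C_{j,m+k}) ≠ (0,0)`. -/
noncomputable def rowOrder {m : ℕ} (C : Matrix (Fin m) (Fin m ⊕ Fin m) ℂ) (j : Fin m) : ℕ :=
  sSup {k : ℕ | ∃ h : k < m, C j (Sum.inl ⟨k, h⟩) ≠ 0 ∨ C j (Sum.inr ⟨k, h⟩) ≠ 0}

/-- The leading pair `(α_j, β_j) = (C_{j,k_j}, C_{j,m+k_j})` of row `j`. -/
noncomputable def leadingPair {m : ℕ} (C : Matrix (Fin m) (Fin m ⊕ Fin m) ℂ) (j : Fin m) :
    ℂ × ℂ :=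
  if h : rowOrder C j < m then
    (C j (Sum.inl ⟨rowOrder C j, h⟩), C j (Sum.inr ⟨rowOrder C j, h⟩))
  else 0

/-- The system `C` is normalized if, for every value `k`, the leading pairs of the rows
of order `k` are linearly independent in `ℂ²`. -/
def IsNormalized {m : ℕ} (C : Matrix (Fin m) (Fin m ⊕ Fin m) ℂ) : Prop :=
  ∀ k : ℕ, LinearIndependent ℂ (fun j : {j : Fin m // rowOrder C j = k} => leadingPair C j.1)

section Aux
variable {m : ℕ}

lemma rowOrder_lt (hm : 1 ≤ m) (C : Matrix (Fin m) (Fin m ⊕ Fin m) ℂ) (j : Fin m) :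
    rowOrder C j < m := by
  unfold rowOrder
  set S := {k : ℕ | ∃ h : k < m, C j (Sum.inl ⟨k, h⟩) ≠ 0 ∨ C j (Sum.inr ⟨k, h⟩) ≠ 0}
  rcases S.eq_empty_or_nonempty with h | h
  · rw [h]; simp; omega
  · exact lt_of_le_of_lt (csSup_le h (fun k hk => Nat.le_pred_of_lt hk.1))
      (Nat.pred_lt (by omega))

lemma entry_zero_of_gt (C : Matrix (Fin m) (Fin m ⊕ Fin m) ℂ) (j : Fin m) {l : Fin m}
    (h : rowOrder C j < l.1) : C j (Sum.inl l) = 0 ∧ C j (Sum.inr l) = 0 := by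
  have hnot : l.1 ∉ {k : ℕ | ∃ h : k < m,
      C j (Sum.inl ⟨k, h⟩) ≠ 0 ∨ C j (Sum.inr ⟨k, h⟩) ≠ 0} := by
    intro hmem
    have : l.1 ≤ rowOrder C j := le_csSup ⟨m, fun k hk => le_of_lt hk.1⟩ hmem
    omega
  constructor <;> by_contra h0
  · exact hnot ⟨l.2, Or.inl h0⟩
  · exact hnot ⟨l.2, Or.inr h0⟩

/-- Core lemma: in a normalized system, if a combination of rows vanishes on all columns
of index `> k`, then the coefficients of rows of order `> k` all vanish. -/
lemma key (C : Matrix (Fin m) (Fin m ⊕ Fin m) ℂ) (hnorm : IsNormalized C) (k : ℕ) :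
    ∀ K : ℕ, ∀ c : Fin m → ℂ, (∀ j, c j ≠ 0 → rowOrder C j < K) →
    (∀ l : Fin m, k < l.1 →
      (∑ j, c j * C j (Sum.inl l)) = 0 ∧ (∑ j, c j * C j (Sum.inr l)) = 0) →
    ∀ j, c j ≠ 0 → rowOrder C j ≤ k := by
  intro K
  induction K with
  | zero => intro c hc _ j hj; exact absurd (hc j hj) (by omega)
  | succ K ih =>
    intro c hc hv j hj
    by_cases hKk : K ≤ k
    · exact le_trans (Nat.lt_succ_iff.mp (hc j hj)) hKk
    push_neg at hKk
    by_cases hKm : K < m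
    · -- rows of order exactly K must have zero coefficients
      set lK : Fin m := ⟨K, hKm⟩ with hlK
      have hzero : ∀ i : Fin m, rowOrder C i = K → c i = 0 := by
        have hsum : (∑ i : Fin m, c i •
            ((C i (Sum.inl lK), C i (Sum.inr lK)) : ℂ × ℂ)) = 0 := by
          have h1 := hv lK hKk
          rw [Prod.ext_iff]
          constructor <;> simp [Prod.fst_sum, Prod.snd_sum, smul_eq_mul, h1.1, h1.2]
        have hfil : (∑ i ∈ Finset.univ.filter (fun i => rowOrder C i = K), c i •
            ((C i (Sum.inl lK), C i (Sum.inr lK)) : ℂ × ℂ)) = 0 := by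
          rw [Finset.sum_filter_of_ne, hsum]
          intro i _ hne
          by_contra hiK
          have hci : c i ≠ 0 := by intro h0; rw [h0] at hne; simp at hne
          have hlt : rowOrder C i < K := lt_of_le_of_ne (Nat.lt_succ_iff.mp (hc i hci)) hiK
          have hz := entry_zero_of_gt C i (l := lK) hlt
          simp [hz.1, hz.2] at hne
        have e1 : (∑ i ∈ Finset.univ.filter (fun i => rowOrder C i = K), c i •
              ((C i (Sum.inl lK), C i (Sum.inr lK)) : ℂ × ℂ))
            = ∑ i : {j : Fin m // rowOrder C j = K}, c i.1 •
              ((C i.1 (Sum.inl lK), C i.1 (Sum.inr lK)) : ℂ × ℂ) :=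
          Finset.sum_subtype _ (fun x => by simp) _
        have hsub : (∑ i : {j : Fin m // rowOrder C j = K}, c i.1 • leadingPair C i.1) = 0 := by
          rw [← hfil, e1]
          refine Finset.sum_congr rfl (fun i _ => ?_)
          have hiK : rowOrder C i.1 = K := i.2
          have hm' : rowOrder C i.1 < m := by rw [hiK]; exact hKm
          have hfe : (⟨rowOrder C i.1, hm'⟩ : Fin m) = lK := Fin.ext hiK
          simp only [leadingPair, dif_pos hm', hfe]
        intro i hiK
        exact Fintype.linearIndependent_iff.mp (hnorm K) (fun i => c i.1) hsub ⟨i, hiK⟩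
      have hc' : ∀ i, c i ≠ 0 → rowOrder C i < K := by
        intro i hi
        rcases lt_or_eq_of_le (Nat.lt_succ_iff.mp (hc i hi)) with h | h
        · exact h
        · exact absurd (hzero i h) hi
      exact ih c hc' hv j hj
    · push_neg at hKm
      have hc' : ∀ i, c i ≠ 0 → rowOrder C i < K := fun i _ =>
        lt_of_lt_of_le (rowOrder_lt j.pos C i) hKm
      exact ih c hc' hv j hj

end Aux

section Count
variable {m : ℕ}

lemma count_le (hm : 1 ≤ m) (C C' : Matrix (Fin m) (Fin m ⊕ Fin m) ℂ)
    (hnormC : IsNormalized C)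
    (hli' : LinearIndependent ℂ (fun j : Fin m => C' j))
    (hspan : ∀ j : Fin m, ∃ c : Fin m → ℂ, ∀ l, C' j l = ∑ i, c i * C i l)
    (k : ℕ) :
    (Finset.univ.filter (fun j => rowOrder C' j ≤ k)).card
      ≤ (Finset.univ.filter (fun j => rowOrder C j ≤ k)).card := by
  classical
  set S := Finset.univ.filter (fun j => rowOrder C j ≤ k) with hS
  set W := Submodule.span ℂ (↑(S.image (fun i => C i)) : Set (Fin m ⊕ Fin m → ℂ)) with hW
  have hmem : ∀ j : Fin m, rowOrder C' j ≤ k → C' j ∈ W := by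
    intro j hj
    obtain ⟨c, hc⟩ := hspan j
    have hsupp : ∀ i, c i ≠ 0 → rowOrder C i ≤ k := by
      apply key C hnormC k m c (fun i _ => rowOrder_lt hm C i)
      intro l hl
      have hz' := entry_zero_of_gt C' j (lt_of_le_of_lt hj hl)
      exact ⟨by rw [← hc (Sum.inl l)]; exact hz'.1, by rw [← hc (Sum.inr l)]; exact hz'.2⟩
    have hrepr : C' j = ∑ i ∈ S, c i • C i := by
      funext l
      rw [hc l, Finset.sum_apply]
      simp only [Pi.smul_apply, smul_eq_mul]
      exact (Finset.sum_filter_of_ne (fun i _ hne => hsupp i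
        (fun h0 => by rw [h0] at hne; simp at hne))).symm
    rw [hrepr]
    exact Submodule.sum_smul_mem W c (fun i hi =>
      Submodule.subset_span (Finset.mem_coe.mpr (Finset.mem_image_of_mem _ hi)))
  haveI : Module.Finite ℂ W :=
    Module.Finite.span_of_finite ℂ (Finset.finite_toSet _)
  have hind : LinearIndependent ℂ
      (fun j : {j : Fin m // rowOrder C' j ≤ k} => (⟨C' j.1, hmem j.1 j.2⟩ : W)) :=
    LinearIndependent.of_comp W.subtype (hli'.comp Subtype.val Subtype.val_injective)
  have h1 : Fintype.card {j : Fin m // rowOrder C' j ≤ k} ≤ Module.finrank ℂ W :=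
    hind.fintype_card_le_finrank
  have h2 : Module.finrank ℂ W ≤ (S.image (fun i => C i)).card := by
    simpa [Set.finrank] using finrank_span_finset_le_card (R := ℂ) (S.image fun i => C i)
  calc (Finset.univ.filter (fun j => rowOrder C' j ≤ k)).card
      = Fintype.card {j : Fin m // rowOrder C' j ≤ k} := (Fintype.card_subtype _).symm
    _ ≤ Module.finrank ℂ W := h1
    _ ≤ (S.image (fun i => C i)).card := h2
    _ ≤ S.card := Finset.card_image_le

end Count

/-- two equivalent normalized rank-`m` systems of boundary conditions
have the same multiset of row orders. -/
theorem stmt14 (m : ℕ) (hm : 1 ≤ m) (C C' : Matrix (Fin m) (Fin m ⊕ Fin m) ℂ)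
    (hrank : C.rank = m) (T : Matrix (Fin m) (Fin m) ℂ) (hT : IsUnit T) (hC' : C' = T * C)
    (hnorm : IsNormalized C) (hnorm' : IsNormalized C') :
    Multiset.map (fun j => rowOrder C j) Finset.univ.val
      = Multiset.map (fun j => rowOrder C' j) Finset.univ.val := by
  classical
  have hrank' : C'.rank = m := by
    rw [hC', Matrix.rank_mul_eq_right_of_isUnit_det T C ((Matrix.isUnit_iff_isUnit_det T).mp hT)]
    exact hrank
  have rows_li : ∀ A : Matrix (Fin m) (Fin m ⊕ Fin m) ℂ, A.rank = m →
      LinearIndependent ℂ (fun j : Fin m => A j) := by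
    intro A hA
    apply linearIndependent_iff_card_eq_finrank_span.mpr
    rw [Fintype.card_fin, Set.finrank]
    exact hA.symm.trans (Matrix.rank_eq_finrank_span_row A)
  obtain ⟨U, hU⟩ := hT
  have hCrev : C = (↑U⁻¹ : Matrix (Fin m) (Fin m) ℂ) * C' := by
    rw [hC', ← hU, ← Matrix.mul_assoc, ← Units.val_mul]
    simp
  have hspanC : ∀ j, ∃ c : Fin m → ℂ, ∀ l, C' j l = ∑ i, c i * C i l := fun j =>
    ⟨fun i => T j i, fun l => by rw [hC']; exact Matrix.mul_apply⟩
  have hspanC' : ∀ j, ∃ c : Fin m → ℂ, ∀ l, C j l = ∑ i, c i * C' i l := fun j =>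
    ⟨fun i => (↑U⁻¹ : Matrix (Fin m) (Fin m) ℂ) j i, fun l => by
      conv_lhs => rw [hCrev]
      exact Matrix.mul_apply⟩
  have hN : ∀ k, (Finset.univ.filter (fun j => rowOrder C j ≤ k)).card
      = (Finset.univ.filter (fun j => rowOrder C' j ≤ k)).card := fun k =>
    le_antisymm (count_le hm C' C hnorm' (rows_li C hrank) hspanC' k)
                (count_le hm C C' hnorm (rows_li C' hrank') hspanC k)
  have hE : ∀ n, (Finset.univ.filter (fun j => rowOrder C j = n)).card
      = (Finset.univ.filter (fun j => rowOrder C' j = n)).card := by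
    intro n
    match n with
    | 0 =>
      have e : ∀ D : Matrix (Fin m) (Fin m ⊕ Fin m) ℂ,
          Finset.univ.filter (fun j => rowOrder D j = 0)
            = Finset.univ.filter (fun j => rowOrder D j ≤ 0) := by
        intro D
        apply Finset.filter_congr
        intro j _
        simp [Nat.le_zero]
      rw [e C, e C']
      exact hN 0
    | n + 1 =>
      have split : ∀ D : Matrix (Fin m) (Fin m ⊕ Fin m) ℂ,
          (Finset.univ.filter (fun j => rowOrder D j ≤ n)).card
            + (Finset.univ.filter (fun j => rowOrder D j = n + 1)).card
            = (Finset.univ.filter (fun j => rowOrder D j ≤ n + 1)).card := by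
        intro D
        rw [← Finset.card_union_of_disjoint]
        · congr 1
          ext j
          simp only [Finset.mem_union, Finset.mem_filter, Finset.mem_univ, true_and]
          omega
        · rw [Finset.disjoint_left]
          intro j h1 h2
          simp only [Finset.mem_filter, Finset.mem_univ, true_and] at h1 h2
          omega
      have s1 := split C
      have s2 := split C'
      have n1 := hN n
      have n2 := hN (n + 1)
      omega
  refine Multiset.ext.mpr fun a => ?_
  rw [Multiset.count_map, Multiset.count_map]
  have e : ∀ D : Matrix (Fin m) (Fin m ⊕ Fin m) ℂ,
      Finset.univ.filter (fun j => a = rowOrder D j)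
        = Finset.univ.filter (fun j => rowOrder D j = a) := by
    intro D
    apply Finset.filter_congr
    intro j _
    exact ⟨Eq.symm, Eq.symm⟩
  have key2 : ∀ D : Matrix (Fin m) (Fin m ⊕ Fin m) ℂ,
      (Multiset.filter (fun j => a = rowOrder D j) Finset.univ.val).card
        = (Finset.univ.filter (fun j => rowOrder D j = a)).card := by
    intro D
    rw [← Finset.filter_val, ← Finset.card_def, e D]
  rw [key2 C, key2 C']
  exact hE a
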